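/- arXiv:2111.15582 — 3 statements merged into one kernel-verified Lean document; each statement's English description precedes it below -/
import Mathlib

section
/- Let Λ ⊆ ℤ² be a lattice (free subgroup) of rank 2. Let (r₀,s₀) ∈ Λ be a nonzero vector with max{|r₀|,|s₀|} minimal, and let (r₁,s₁) be chosen so that v₀=(r₀,s₀), v₁=(r₁,s₁) form a basis of Λ with max{|r₁|,|s₁|} minimal among such completions. Set M = max{|r₀|,|s₀|,|r₁|,|s₁|}. Then there exists a basis v₀'=(r₀',s₀'), v₁'=(r₁',s₁') of Λ with all coordinates r₀',s₀',r₁',s₁' ≥ 0 and max{r₀',s₀',r₁',s₁'} ≤ 3M. -/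
/-- `v₀, v₁` form a basis of the subgroup `Λ` of `ℤ × ℤ`. -/
def IsLatticeBasis (Λ : AddSubgroup (ℤ × ℤ)) (v₀ v₁ : ℤ × ℤ) : Prop :=
  v₀ ∈ Λ ∧ v₁ ∈ Λ ∧ (∀ w ∈ Λ, ∃ m n : ℤ, w = m • v₀ + n • v₁) ∧
    ∀ m n : ℤ, m • v₀ + n • v₁ = 0 → m = 0 ∧ n = 0

/-- sup-norm of a vector in `ℤ × ℤ`. -/
def supNorm (v : ℤ × ℤ) : ℤ := max |v.1| |v.2|


lemma comb_eq (m n : ℤ) (a b : ℤ × ℤ) :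
    m • a + n • b = (m * a.1 + n * b.1, m * a.2 + n * b.2) := by
  ext <;> simp [Prod.smul_def, smul_eq_mul]

lemma basis_change (Λ : AddSubgroup (ℤ × ℤ)) (a b : ℤ × ℤ) (p q r s : ℤ)
    (h : IsLatticeBasis Λ a b) (hdet : p * s - q * r = 1 ∨ p * s - q * r = -1) :
    IsLatticeBasis Λ (p • a + q • b) (r • a + s • b) := by
  obtain ⟨ha, hb, hspan, hind⟩ := h
  have he2 : (p * s - q * r) * (p * s - q * r) = 1 := by
    rcases hdet with h | h <;> rw [h] <;> ring
  set e := p * s - q * r with hedef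
  refine ⟨by exact AddSubgroup.add_mem _ (AddSubgroup.zsmul_mem _ ha _) (AddSubgroup.zsmul_mem _ hb _),
    by exact AddSubgroup.add_mem _ (AddSubgroup.zsmul_mem _ ha _) (AddSubgroup.zsmul_mem _ hb _), ?_, ?_⟩
  · intro w hw
    obtain ⟨m, n, hmn⟩ := hspan w hw
    refine ⟨e * (s * m - r * n), e * (p * n - q * m), ?_⟩
    simp only [hmn, comb_eq, Prod.mk.injEq]
    constructor
    · linear_combination (-(m * a.1 + n * b.1)) * he2
    · linear_combination (-(m * a.2 + n * b.2)) * he2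
  · intro m n hmn
    rw [comb_eq, comb_eq, comb_eq] at hmn
    have h2 : (m * p + n * r) • a + (m * q + n * s) • b = 0 := by
      rw [comb_eq]
      convert hmn using 2 <;> ring
    obtain ⟨hp, hq⟩ := hind _ _ h2
    constructor
    · linear_combination (e * s) * hp - (e * r) * hq - m * he2
    · linear_combination (-(e * q)) * hp + (e * p) * hq - n * he2

lemma ceil_div_facts (x y : ℤ) (hx : 0 ≤ x) (hy : 0 < y) :
    x < (x / y + 1) * y ∧ (x / y + 1) * y ≤ x + y ∧ 0 ≤ x / y + 1 := by
  have h1 := Int.emod_nonneg x (ne_of_gt hy)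
  have h2 := Int.emod_lt_of_pos x hy
  have h3 := Int.mul_ediv_add_emod x y
  have h4 : 0 ≤ x / y := Int.ediv_nonneg hx (le_of_lt hy)
  refine ⟨?_, ?_, by linarith⟩ <;> nlinarith [h3]

lemma supNorm_nonneg (v : ℤ × ℤ) : 0 ≤ supNorm v :=
  le_trans (abs_nonneg _) (le_max_left _ _)

lemma abs_fst_le (v : ℤ × ℤ) : |v.1| ≤ supNorm v := le_max_left _ _
lemma abs_snd_le (v : ℤ × ℤ) : |v.2| ≤ supNorm v := le_max_right _ _

lemma supNorm_neg (v : ℤ × ℤ) : supNorm (-v) = supNorm v := by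
  simp [supNorm]

lemma supNorm_le (v : ℤ × ℤ) (C : ℤ) (h1 : |v.1| ≤ C) (h2 : |v.2| ≤ C) :
    supNorm v ≤ C := max_le h1 h2

/-- Recipe: u with u.1 < 0 ≤ u.2, w in first quadrant nonzero. -/
lemma recipeQ2Q1 (Λ : AddSubgroup (ℤ × ℤ)) (u w : ℤ × ℤ)
    (hu1 : u.1 < 0) (hu2 : 0 ≤ u.2) (hw1 : 0 ≤ w.1) (hw2 : 0 ≤ w.2) (hw0 : w ≠ 0)
    (h : IsLatticeBasis Λ u w) :
    ∃ a b : ℤ × ℤ, IsLatticeBasis Λ a b ∧ 0 ≤ a.1 ∧ 0 ≤ a.2 ∧ 0 ≤ b.1 ∧ 0 ≤ b.2 ∧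
      max (supNorm a) (supNorm b) ≤ 2 * supNorm u + supNorm w := by
  have hau1 := abs_fst_le u; have hau2 := abs_snd_le u
  have haw1 := abs_fst_le w; have haw2 := abs_snd_le w
  have hu1' : |u.1| = -u.1 := abs_of_neg hu1
  have hu2' : |u.2| = u.2 := abs_of_nonneg hu2
  have hw1' : |w.1| = w.1 := abs_of_nonneg hw1
  have hw2' : |w.2| = w.2 := abs_of_nonneg hw2
  have hNu := supNorm_nonneg u
  rcases le_or_gt w.1 w.2 with hcase | hcase
  · have hw2pos : 0 < w.2 := by
      rcases lt_or_eq_of_le hw2 with h' | h'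
      · exact h'
      · exfalso
        apply hw0
        have e1 : w.1 = 0 := by omega
        have e2 : w.2 = 0 := by omega
        rw [Prod.ext_iff]; simp [e1, e2]
    obtain ⟨hk1, hk2, hk3⟩ := ceil_div_facts u.2 w.2 hu2 hw2pos
    set k := u.2 / w.2 + 1 with hkdef
    have hkw : k * w.1 ≤ k * w.2 := mul_le_mul_of_nonneg_left hcase hk3
    have hkw1 : 0 ≤ k * w.1 := mul_nonneg hk3 hw1
    have hb := basis_change Λ u w 0 1 (-1) k h (by left; ring)
    simp only [zero_smul, one_smul, zero_add] at hb
    set c := (-1 : ℤ) • u + k • w with hc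
    have hc1 : c.1 = -u.1 + k * w.1 := by rw [hc, comb_eq]; ring
    have hc2 : c.2 = -u.2 + k * w.2 := by rw [hc, comb_eq]; ring
    refine ⟨w, c, hb, hw1, hw2, by linarith, by linarith, ?_⟩
    apply max_le
    · linarith [le_max_left (supNorm w) (supNorm c)]
    · apply supNorm_le <;> rw [abs_le] <;> constructor <;> linarith
  · have hw1pos : 0 < w.1 := lt_of_le_of_lt hw2 hcase
    obtain ⟨hk1, hk2, hk3⟩ := ceil_div_facts (-u.1) w.1 (by linarith) hw1pos
    set k := -u.1 / w.1 + 1 with hkdef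
    have hkw : k * w.2 ≤ k * w.1 := mul_le_mul_of_nonneg_left (le_of_lt hcase) hk3
    have hkw2 : 0 ≤ k * w.2 := mul_nonneg hk3 hw2
    have hb := basis_change Λ u w 0 1 1 k h (by right; ring)
    simp only [zero_smul, one_smul, zero_add] at hb
    set c := u + k • w with hc
    have hc1 : c.1 = u.1 + k * w.1 := by simp [hc, Prod.smul_def]
    have hc2 : c.2 = u.2 + k * w.2 := by simp [hc, Prod.smul_def]
    refine ⟨w, c, hb, hw1, hw2, by linarith, by linarith, ?_⟩
    apply max_le
    · linarith
    · apply supNorm_le <;> rw [abs_le] <;> constructor <;> linarith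

lemma ne_of_basis_fst (Λ : AddSubgroup (ℤ × ℤ)) (u w : ℤ × ℤ) (h : IsLatticeBasis Λ u w) :
    u ≠ w := by
  intro he
  have h0 : (1 : ℤ) • u + (-1 : ℤ) • w = 0 := by rw [he]; module
  have := (h.2.2.2 1 (-1) h0).1
  norm_num at this

lemma recipeQ2Q2 : ∀ n : ℕ, ∀ (Λ : AddSubgroup (ℤ × ℤ)) (u w : ℤ × ℤ),
    u.1 < 0 → 0 < u.2 → w.1 < 0 → 0 < w.2 → (u.2 + w.2).toNat ≤ n →
    IsLatticeBasis Λ u w →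
    ∃ a b : ℤ × ℤ, IsLatticeBasis Λ a b ∧ 0 ≤ a.1 ∧ 0 ≤ a.2 ∧ 0 ≤ b.1 ∧ 0 ≤ b.2 ∧
      max (supNorm a) (supNorm b) ≤ 3 * max (supNorm u) (supNorm w) := by
  intro n
  induction n with
  | zero => intro Λ u w hu1 hu2 hw1 hw2 hn h; omega
  | succ n ih =>
    intro Λ u w hu1 hu2 hw1 hw2 hn h
    have hau1 := abs_fst_le u; have hau2 := abs_snd_le u
    have haw1 := abs_fst_le w; have haw2 := abs_snd_le w
    have hu1' : |u.1| = -u.1 := abs_of_neg hu1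
    have hu2' : |u.2| = u.2 := abs_of_nonneg (le_of_lt hu2)
    have hw1' : |w.1| = -w.1 := abs_of_neg hw1
    have hw2' : |w.2| = w.2 := abs_of_nonneg (le_of_lt hw2)
    set N := max (supNorm u) (supNorm w) with hN
    have hNu : supNorm u ≤ N := le_max_left _ _
    have hNw : supNorm w ≤ N := le_max_right _ _
    rcases le_or_gt w.2 u.2 with hord | hord
    · -- d = u - w
      set d := u - w with hd
      have hd1 : d.1 = u.1 - w.1 := by simp [hd]
      have hd2 : d.2 = u.2 - w.2 := by simp [hd]
      have hdb : IsLatticeBasis Λ w d := by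
        have := basis_change Λ u w 0 1 1 (-1) h (by right; ring)
        simp only [zero_smul, one_smul, zero_add, neg_smul, ← sub_eq_add_neg] at this
        exact this
      have hdnorm : supNorm d ≤ N := by
        apply supNorm_le <;> rw [abs_le] <;> constructor <;> linarith
      rcases le_or_gt 0 d.1 with hd1s | hd1s
      · -- d in Q1
        have hd0 : d ≠ 0 := sub_ne_zero.mpr (ne_of_basis_fst Λ u w h)
        obtain ⟨a, b, hb, h1, h2, h3, h4, h5⟩ :=
          recipeQ2Q1 Λ w d hw1 (le_of_lt hw2) hd1s (by linarith) hd0 hdb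
        exact ⟨a, b, hb, h1, h2, h3, h4, by linarith⟩
      · rcases lt_or_eq_of_le (show (0:ℤ) ≤ d.2 by linarith) with hd2s | hd2s
        · -- d in Q2, recurse on (d, w)
          have hdb' : IsLatticeBasis Λ d w := by
            have := basis_change Λ u w 1 (-1) 0 1 h (by left; ring)
            simp only [zero_smul, one_smul, zero_add, add_zero, neg_smul,
              ← sub_eq_add_neg] at this
            exact this
          obtain ⟨a, b, hb, h1, h2, h3, h4, h5⟩ :=
            ih Λ d w hd1s hd2s hw1 hw2 (by omega) hdb'
          refine ⟨a, b, hb, h1, h2, h3, h4, ?_⟩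
          have : max (supNorm d) (supNorm w) ≤ N := max_le hdnorm hNw
          linarith
        · -- d.2 = 0, d.1 < 0 : use e = -d = w - u
          have heb : IsLatticeBasis Λ w (w - u) := by
            have := basis_change Λ u w 0 1 (-1) 1 h (by left; ring)
            simp only [zero_smul, one_smul, zero_add, neg_smul, neg_one_smul] at this
            have he : -u + w = w - u := by module
            rwa [he] at this
          have he1 : (w - u).1 = -d.1 := by simp [hd]
          have he2 : (w - u).2 = -d.2 := by simp [hd]
          have he0 : (w - u) ≠ 0 := by
            intro hz
            have := congrArg Prod.fst hz
            simp at this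
            omega
          obtain ⟨a, b, hb, h1, h2, h3, h4, h5⟩ :=
            recipeQ2Q1 Λ w (w - u) hw1 (le_of_lt hw2) (by omega) (by omega) he0 heb
          refine ⟨a, b, hb, h1, h2, h3, h4, ?_⟩
          have hen : supNorm (w - u) ≤ N := by
            apply supNorm_le <;> rw [abs_le] <;> constructor <;> omega
          linarith
    · -- u.2 < w.2 : d = w - u, d.2 > 0
      set d := w - u with hd
      have hd1 : d.1 = w.1 - u.1 := by simp [hd]
      have hd2 : d.2 = w.2 - u.2 := by simp [hd]
      have hd2s : 0 < d.2 := by omega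
      have hdb : IsLatticeBasis Λ u d := by
        have := basis_change Λ u w 1 0 (-1) 1 h (by left; ring)
        simp only [zero_smul, one_smul, zero_add, add_zero, neg_one_smul] at this
        have he : -u + w = w - u := by module
        rwa [he] at this
      have hdnorm : supNorm d ≤ N := by
        apply supNorm_le <;> rw [abs_le] <;> constructor <;> linarith
      rcases le_or_gt 0 d.1 with hd1s | hd1s
      · obtain ⟨a, b, hb, h1, h2, h3, h4, h5⟩ :=
          recipeQ2Q1 Λ u d hu1 (le_of_lt hu2) hd1s (le_of_lt hd2s) (by
            intro hz
            have := congrArg Prod.snd hz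
            simp at this
            omega) hdb
        exact ⟨a, b, hb, h1, h2, h3, h4, by linarith⟩
      · obtain ⟨a, b, hb, h1, h2, h3, h4, h5⟩ :=
          ih Λ u d hu1 hu2 hd1s hd2s (by omega) hdb
        refine ⟨a, b, hb, h1, h2, h3, h4, ?_⟩
        have : max (supNorm u) (supNorm d) ≤ N := max_le hNu hdnorm
        linarith

lemma normalize_sign (v : ℤ × ℤ) (hv : v ≠ 0) :
    ∃ a : ℤ × ℤ, (a = v ∨ a = -v) ∧ (0 ≤ a.2) ∧ (a.2 = 0 → 0 < a.1) := by
  have hv' : v.1 ≠ 0 ∨ v.2 ≠ 0 := by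
    by_contra hc
    push_neg at hc
    apply hv
    rw [Prod.ext_iff]; simp [hc.1, hc.2]
  rcases lt_trichotomy v.2 0 with h2 | h2 | h2
  · exact ⟨-v, Or.inr rfl, by simp; omega, by simp; omega⟩
  · rcases lt_trichotomy v.1 0 with h1 | h1 | h1
    · exact ⟨-v, Or.inr rfl, by simp; omega, by simp; omega⟩
    · exfalso; rcases hv' with h | h <;> omega
    · exact ⟨v, Or.inl rfl, le_of_eq h2.symm, fun _ => h1⟩
  · exact ⟨v, Or.inl rfl, le_of_lt h2, fun h => absurd h (ne_of_gt h2)⟩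

theorem stmt0 (Λ : AddSubgroup (ℤ × ℤ)) (v₀ v₁ : ℤ × ℤ)
    (hv₀ : v₀ ∈ Λ) (hv₀ne : v₀ ≠ 0)
    (hv₀min : ∀ w ∈ Λ, w ≠ 0 → supNorm v₀ ≤ supNorm w)
    (hbasis : IsLatticeBasis Λ v₀ v₁)
    (hv₁min : ∀ w : ℤ × ℤ, IsLatticeBasis Λ v₀ w → supNorm v₁ ≤ supNorm w)
    (M : ℤ) (hM : M = max (supNorm v₀) (supNorm v₁)) :
    ∃ v₀' v₁' : ℤ × ℤ, IsLatticeBasis Λ v₀' v₁' ∧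
      0 ≤ v₀'.1 ∧ 0 ≤ v₀'.2 ∧ 0 ≤ v₁'.1 ∧ 0 ≤ v₁'.2 ∧
      max (supNorm v₀') (supNorm v₁') ≤ 3 * M := by
  have hv₁ne : v₁ ≠ 0 := by
    intro hz
    have h0 : (0 : ℤ) • v₀ + (1 : ℤ) • v₁ = 0 := by rw [hz]; module
    have := (hbasis.2.2.2 0 1 h0).2
    norm_num at this
  obtain ⟨a, ha, ha2, ha2'⟩ := normalize_sign v₀ hv₀ne
  obtain ⟨b, hb, hb2, hb2'⟩ := normalize_sign v₁ hv₁ne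
  have hNa : supNorm a = supNorm v₀ := by rcases ha with rfl | rfl; rfl; exact supNorm_neg v₀
  have hNb : supNorm b = supNorm v₁ := by rcases hb with rfl | rfl; rfl; exact supNorm_neg v₁
  have hab : IsLatticeBasis Λ a b := by
    have key : ∀ p q : ℤ, p = 1 ∨ p = -1 → q = 1 ∨ q = -1 →
        IsLatticeBasis Λ (p • v₀) (q • v₁) := by
      intro p q hp hq
      have := basis_change Λ v₀ v₁ p 0 0 q hbasis (by rcases hp with rfl | rfl <;>
        rcases hq with rfl | rfl <;> simp)
      simpa using this
    rcases ha with rfl | rfl <;> rcases hb with rfl | rfl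
    · exact hbasis
    · simpa using key 1 (-1) (Or.inl rfl) (Or.inr rfl)
    · simpa using key (-1) 1 (Or.inr rfl) (Or.inl rfl)
    · simpa using key (-1) (-1) (Or.inr rfl) (Or.inr rfl)
  have hMa : supNorm a ≤ M := by rw [hNa, hM]; exact le_max_left _ _
  have hMb : supNorm b ≤ M := by rw [hNb, hM]; exact le_max_right _ _
  have hM0 : 0 ≤ M := le_trans (supNorm_nonneg a) hMa
  have ha0 : a ≠ 0 := by rcases ha with rfl | rfl; exact hv₀ne; simpa using hv₀ne
  have hb0 : b ≠ 0 := by rcases hb with rfl | rfl; exact hv₁ne; simpa using hv₁ne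
  rcases le_or_gt 0 a.1 with ha1 | ha1 <;> rcases le_or_gt 0 b.1 with hb1 | hb1
  · exact ⟨a, b, hab, ha1, ha2, hb1, hb2, by
      apply max_le <;> linarith⟩
  · -- b.1 < 0, a.1 ≥ 0 : recipe with (b, a)
    have hba : IsLatticeBasis Λ b a := by
      have := basis_change Λ a b 0 1 1 0 hab (by right; ring)
      simpa using this
    have hbb2 : 0 < b.2 := by
      rcases lt_or_eq_of_le hb2 with h' | h'; exact h'; exact absurd (hb2' h'.symm) (by omega)
    obtain ⟨x, y, hxy, h1, h2, h3, h4, h5⟩ :=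
      recipeQ2Q1 Λ b a hb1 hb2 ha1 ha2 ha0 hba
    exact ⟨x, y, hxy, h1, h2, h3, h4, by linarith⟩
  · -- a.1 < 0, b.1 ≥ 0
    obtain ⟨x, y, hxy, h1, h2, h3, h4, h5⟩ :=
      recipeQ2Q1 Λ a b ha1 ha2 hb1 hb2 hb0 hab
    exact ⟨x, y, hxy, h1, h2, h3, h4, by linarith⟩
  · -- both negative first coords
    have haa2 : 0 < a.2 := by
      rcases lt_or_eq_of_le ha2 with h' | h'; exact h'; exact absurd (ha2' h'.symm) (by omega)
    have hbb2 : 0 < b.2 := by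
      rcases lt_or_eq_of_le hb2 with h' | h'; exact h'; exact absurd (hb2' h'.symm) (by omega)
    obtain ⟨x, y, hxy, h1, h2, h3, h4, h5⟩ :=
      recipeQ2Q2 (a.2 + b.2).toNat Λ a b ha1 haa2 hb1 hbb2 le_rfl hab
    refine ⟨x, y, hxy, h1, h2, h3, h4, ?_⟩
    have : max (supNorm a) (supNorm b) ≤ M := max_le hMa hMb
    linarith
end

section
/- Let Λ ⊆ ℤ² be a rank-2 lattice, and let v₀=(r₀,s₀), v₁=(r₁,s₁) be a basis with v₀ of minimal sup-norm among nonzero vectors of Λ and v₁ of minimal sup-norm among vectors completing v₀ to a basis. Then it is impossible that all four coordinates are nonzero with r₀,r₁ > 0 and s₀,s₁ < 0 (i.e., the coordinates of both basis vectors cannot have strictly opposite signs in the same pattern). -/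
theorem stmt1 (Λ : AddSubgroup (ℤ × ℤ)) (v₀ v₁ : ℤ × ℤ)
    (hv₀ : v₀ ∈ Λ) (hv₀ne : v₀ ≠ 0)
    (hv₀min : ∀ w ∈ Λ, w ≠ 0 → supNorm v₀ ≤ supNorm w)
    (hbasis : IsLatticeBasis Λ v₀ v₁)
    (hv₁min : ∀ w : ℤ × ℤ, IsLatticeBasis Λ v₀ w → supNorm v₁ ≤ supNorm w) :
    ¬(0 < v₀.1 ∧ 0 < v₁.1 ∧ v₀.2 < 0 ∧ v₁.2 < 0) := by
  rintro ⟨hr0, hr1, hs0, hs1⟩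
  obtain ⟨h0, h1, hspan, hind⟩ := hbasis
  have hv1ne : v₁ ≠ 0 := by
    intro h
    have := (hind 0 1 (by simp [h])).2
    omega
  have h01 : supNorm v₀ ≤ supNorm v₁ := hv₀min v₁ h1 hv1ne
  have hb' : IsLatticeBasis Λ v₀ (v₁ - v₀) := by
    refine ⟨h0, Λ.sub_mem h1 h0, ?_, ?_⟩
    · intro w hw
      obtain ⟨m, n, rfl⟩ := hspan w hw
      exact ⟨m + n, n, by rw [add_smul, smul_sub]; abel⟩
    · intro m n h
      have h2 : (m - n) • v₀ + n • v₁ = 0 := by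
        rw [← h, sub_smul, smul_sub]; abel
      have := hind (m - n) n h2
      omega
  have hle := hv₁min _ hb'
  simp only [supNorm, Prod.fst_sub, Prod.snd_sub] at hle h01
  rw [abs_of_pos hr0, abs_of_pos hr1, abs_of_neg hs0, abs_of_neg hs1] at h01
  rw [abs_of_pos hr1, abs_of_neg hs1] at hle
  rcases abs_cases (v₁.1 - v₀.1) with ⟨ha, _⟩ | ⟨ha, _⟩ <;>
    rcases abs_cases (v₁.2 - v₀.2) with ⟨hb, _⟩ | ⟨hb, _⟩ <;>
      rw [ha, hb] at hle <;> omega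
end

section
/- Let S be a finite set of places of ℚ (possibly including the archimedean place) and let ε > 0. Then there exist a rational linear fractional transformation ψ (invertible Möbius map with rational coefficients) and integers M ≥ 1, A, B such that: whenever t ∈ ℚ and ψ(t) = a/b with a, b positive integers satisfying a ≡ A (mod M) and b ≡ B (mod M), we have |t|_v < ε for every v ∈ S. -/
/-- A finite set of places of ℚ, given by a finite set of primes together with a flag
indicating whether the archimedean place is included. Statement of Lemma on
linear fractional transformations controlling places. -/
theorem stmt3 (S : Finset ℕ) (hS : ∀ p ∈ S, p.Prime) (arch : Bool)
    (ε : ℚ) (hε : 0 < ε) :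
    ∃ (α β γ δ : ℚ) (M A B : ℤ), 1 ≤ M ∧ α * δ - β * γ ≠ 0 ∧
      ∀ (t : ℚ) (a b : ℤ), 0 < a → 0 < b →
        a ≡ A [ZMOD M] → b ≡ B [ZMOD M] →
        (α * t + β) / (γ * t + δ) = (a : ℚ) / b →
        (∀ p ∈ S, padicNorm p t < ε) ∧ (arch = true → |t| < ε) := by
  obtain ⟨n0, hn0⟩ := exists_pow_lt_of_lt_one (show (0:ℚ) < ε/2 by linarith)
    (show (1:ℚ)/2 < 1 by norm_num)
  set n : ℕ := n0 + 2 with hn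
  have hpow : ((1:ℚ)/2)^n < ε/2 := by
    calc ((1:ℚ)/2)^n ≤ ((1:ℚ)/2)^n0 :=
          pow_le_pow_of_le_one (by norm_num) (by norm_num) (by omega)
      _ < ε/2 := hn0
  set P : ℤ := ∏ p ∈ S, (p:ℤ) with hP
  have hPpos : 0 < P := Finset.prod_pos (fun p hp => by exact_mod_cast (hS p hp).pos)
  set N : ℤ := 2^n with hNdef
  have hNpos : 0 < N := by positivity
  set M : ℤ := 2^n * P^n with hMdef
  have hMpos : 0 < M := by positivity
  refine ⟨(N:ℚ), 1, -(N:ℚ), 1, M, 1, 1, hMpos, ?_, ?_⟩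
  · have hN0 : (N:ℚ) ≠ 0 := by exact_mod_cast hNpos.ne'
    intro h
    apply hN0
    linarith [h]
  intro t a b ha hb hA hB heq
  have hbQ : (0:ℚ) < (b:ℚ) := by exact_mod_cast hb
  have haQ : (0:ℚ) < (a:ℚ) := by exact_mod_cast ha
  have habQ : (0:ℚ) < (a:ℚ) + b := by linarith
  have hNQ : (0:ℚ) < (N:ℚ) := by exact_mod_cast hNpos
  have hden : -(N:ℚ) * t + 1 ≠ 0 := by
    intro h
    rw [h, div_zero] at heq
    have h2 : (0:ℚ) < (a:ℚ)/b := div_pos haQ hbQ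
    rw [← heq] at h2
    exact lt_irrefl 0 h2
  have key : t = ((a:ℚ) - b) / ((N:ℚ) * ((a:ℚ) + b)) := by
    rw [div_eq_div_iff hden hbQ.ne'] at heq
    rw [eq_div_iff (by positivity)]
    linear_combination heq
  -- divisibilities
  have hdvd1 : M ∣ (a - b) := dvd_sub_comm.mp (hA.trans hB.symm).dvd
  have hdvd2 : M ∣ (a + b - 2) := dvd_sub_comm.mp (hA.add hB).dvd
  constructor
  · intro p hpS
    haveI : Fact p.Prime := ⟨hS p hpS⟩
    have hpdvdP : (p:ℤ) ∣ P := Finset.dvd_prod_of_mem _ hpS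
    by_cases hab : a = b
    · rw [key, hab]
      simp [hε]
    · obtain ⟨k, hk⟩ := hdvd1
      have ht : t = ((M:ℚ) * k) / ((N:ℚ) * ((a:ℚ) + b)) := by
        rw [key]
        congr 1
        exact_mod_cast congrArg (fun z : ℤ => (z:ℚ)) hk
      -- norm bounds
      have hNnorm0 : padicNorm p (N:ℚ) ≠ 0 := padicNorm.nonzero (by exact_mod_cast hNpos.ne')
      have hNnormpos : 0 < padicNorm p (N:ℚ) := (padicNorm.nonneg _).lt_of_ne' hNnorm0
      have hPnorm : padicNorm p (P:ℚ) ≤ ((p:ℚ))⁻¹ := by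
        have := padicNorm.dvd_iff_norm_le (p := p) (n := 1) (z := P) |>.mp (by simpa using hpdvdP)
        simpa using this
      have hPnorm0 : 0 ≤ padicNorm p (P:ℚ) := padicNorm.nonneg _
      have hphalf : ((p:ℚ))⁻¹ ≤ 1/2 := by
        have h2p : (2:ℚ) ≤ p := by exact_mod_cast (Fact.out : p.Prime).two_le
        rw [inv_le_comm₀ (by linarith) (by norm_num)]
        linarith
      have hMnorm : padicNorm p (M:ℚ)
          = padicNorm p (N:ℚ) * (padicNorm p (P:ℚ))^n := by
        have : (M:ℚ) = (N:ℚ) * ((P:ℚ))^n := by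
          rw [hMdef, hNdef]; push_cast; ring
        rw [this, padicNorm.mul, IsAbsoluteValue.abv_pow (padicNorm p)]
      have hknorm : padicNorm p ((k:ℤ):ℚ) ≤ 1 := padicNorm.of_int k
      have hknorm0 : 0 ≤ padicNorm p ((k:ℤ):ℚ) := padicNorm.nonneg _
      -- lower bound for a+b
      have habnorm : 1/2 ≤ padicNorm p ((a:ℚ) + b) := by
        have hcast : ((a + b : ℤ):ℚ) = (a:ℚ) + b := by push_cast; ring
        rw [← hcast]
        by_cases hp2 : p = 2
        · subst hp2
          have h4M : (4:ℤ) ∣ M := by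
            rw [hMdef]
            exact Dvd.dvd.mul_right (by
              have : (4:ℤ) = 2^2 := by norm_num
              rw [this]
              exact pow_dvd_pow 2 (by omega)) _
          obtain ⟨m, hm⟩ := h4M.trans hdvd2
          have hab2 : a + b = 2 * (2*m + 1) := by omega
          rw [hab2]
          have : ((2 * (2*m+1) : ℤ):ℚ) = ((2:ℤ):ℚ) * ((2*m+1 : ℤ):ℚ) := by push_cast; ring
          rw [this, padicNorm.mul]
          have h1 : padicNorm 2 ((2:ℤ):ℚ) = ((2:ℚ))⁻¹ := by
            simpa using padicNorm.padicNorm_p (p := 2) (by norm_num)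
          have h2 : padicNorm 2 ((2*m+1 : ℤ):ℚ) = 1 :=
            (padicNorm.int_eq_one_iff _).mpr (by omega)
          rw [h1, h2]
          norm_num
        · have hpodd : ¬ (p:ℤ) ∣ (a+b) := by
            intro hdvd
            have hpM : (p:ℤ) ∣ M := by
              rw [hMdef]
              exact Dvd.dvd.mul_left (hpdvdP.trans (dvd_pow_self P (by omega))) _
            have hp2' : (p:ℤ) ∣ 2 := by
              have h' := dvd_sub hdvd (hpM.trans hdvd2)
              simpa using h'
            have : (p:ℕ) ∣ 2 := by exact_mod_cast hp2'
            have := Nat.le_of_dvd (by norm_num) this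
            have := (Fact.out : p.Prime).two_le
            omega
          rw [(padicNorm.int_eq_one_iff _).mpr hpodd]
          norm_num
      have habnormpos : 0 < padicNorm p ((a:ℚ) + b) := by linarith
      -- assemble
      rw [ht, padicNorm.div, padicNorm.mul, padicNorm.mul, hMnorm]
      rw [div_lt_iff₀ (mul_pos hNnormpos habnormpos)]
      have hcn : (padicNorm p (P:ℚ))^n ≤ ((1:ℚ)/2)^n :=
        pow_le_pow_left₀ hPnorm0 (le_trans hPnorm hphalf) n
      have hcn0 : 0 ≤ (padicNorm p (P:ℚ))^n := by positivity
      nlinarith [mul_pos hNnormpos habnormpos, mul_le_mul_of_nonneg_left hcn hNnormpos.le,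
        mul_le_mul_of_nonneg_left hknorm (mul_nonneg hNnormpos.le hcn0),
        mul_lt_mul_of_pos_left hpow hNnormpos,
        mul_le_mul_of_nonneg_left habnorm (le_of_lt (mul_pos hε hNnormpos))]
  · intro _
    rw [key, abs_div, abs_of_pos (show (0:ℚ) < (N:ℚ)*((a:ℚ)+b) by positivity)]
    rw [div_lt_iff₀ (show (0:ℚ) < (N:ℚ)*((a:ℚ)+b) by positivity)]
    have habs : |(a:ℚ) - b| < (a:ℚ) + b := abs_lt.mpr ⟨by linarith, by linarith⟩
    have hhalf : ((1:ℚ)/2)^n * 2^n = 1 := by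
      rw [← mul_pow]; norm_num
    have hNcast : (N:ℚ) = 2^n := by rw [hNdef]; push_cast; ring
    have h1 : (1:ℚ) < (ε/2) * 2^n := by
      have := mul_lt_mul_of_pos_right hpow (show (0:ℚ) < 2^n by positivity)
      rw [hhalf] at this
      linarith
    rw [hNcast]
    nlinarith [habs, mul_lt_mul_of_pos_right h1 habQ]
end
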